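/- The function g is twice differentiable on ℝ, and for every z ∈ ℝ its second derivative equals g''(z) = [ (∫_a^b exp(z·E(t)) dt)·(∫_a^b E(t)²·exp(z·E(t)) dt) − (∫_a^b E(t)·exp(z·E(t)) dt)² ] / (∫_a^b exp(z·E(t)) dt)². -/

import Mathlib

open MeasureTheory Real Set intervalIntegral Metric

private lemma key_deriv (a b : ℝ) (hab : a < b) (E : ℝ → ℝ)
    (hE : ContinuousOn E (Set.Icc a b)) (h : ℝ → ℝ)
    (hh : ContinuousOn h (Set.Icc a b)) (z₀ : ℝ) :
    HasDerivAt (fun z => ∫ t in a..b, h t * Real.exp (z * E t))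
      (∫ t in a..b, (E t * h t) * Real.exp (z₀ * E t)) z₀ := by
  obtain ⟨M, hM⟩ := isCompact_Icc.exists_bound_of_continuousOn hE
  obtain ⟨C, hC⟩ := isCompact_Icc.exists_bound_of_continuousOn hh
  have hM0 : 0 ≤ M := le_trans (norm_nonneg _) (hM a ⟨le_refl a, hab.le⟩)
  have hC0 : 0 ≤ C := le_trans (norm_nonneg _) (hC a ⟨le_refl a, hab.le⟩)
  have hIoc : Set.uIoc a b = Set.Ioc a b := Set.uIoc_of_le hab.le
  have hsub : Set.Ioc a b ⊆ Set.Icc a b := Set.Ioc_subset_Icc_self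
  have hEm : AEStronglyMeasurable E (volume.restrict (Set.uIoc a b)) := by
    rw [hIoc]
    exact (hE.mono hsub).aestronglyMeasurable measurableSet_Ioc
  have hhm : AEStronglyMeasurable h (volume.restrict (Set.uIoc a b)) := by
    rw [hIoc]
    exact (hh.mono hsub).aestronglyMeasurable measurableSet_Ioc
  have hcont : ∀ z : ℝ, ContinuousOn (fun t => h t * Real.exp (z * E t)) (Set.Icc a b) :=
    fun z => hh.mul (Real.continuous_exp.comp_continuousOn (continuousOn_const.mul hE))
  have main := intervalIntegral.hasDerivAt_integral_of_dominated_loc_of_deriv_le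
    (F := fun z t => h t * Real.exp (z * E t))
    (F' := fun z t => (E t * h t) * Real.exp (z * E t))
    (bound := fun _ => M * C * Real.exp ((|z₀| + 1) * M)) (a := a) (b := b)
    (μ := volume) (x₀ := z₀) (ball_mem_nhds z₀ one_pos)
    (Filter.Eventually.of_forall fun x =>
      hhm.mul (Real.continuous_exp.comp_aestronglyMeasurable (hEm.const_mul x)))
    (by
      apply (hcont z₀).intervalIntegrable_of_Icc hab.le)
    (((hEm.mul hhm).mul
      (Real.continuous_exp.comp_aestronglyMeasurable (hEm.const_mul z₀))))
    (Filter.Eventually.of_forall fun t ht x hx => by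
      rw [hIoc] at ht
      have htI := hsub ht
      have hE' := hM t htI
      have hh' := hC t htI
      have hx' : |x| ≤ |z₀| + 1 := by
        have := abs_sub_abs_le_abs_sub x z₀
        rw [mem_ball, Real.dist_eq] at hx
        linarith
      have hexp : Real.exp (x * E t) ≤ Real.exp ((|z₀| + 1) * M) := by
        apply Real.exp_le_exp.2
        calc x * E t ≤ |x * E t| := le_abs_self _
          _ = |x| * |E t| := abs_mul x (E t)
          _ ≤ (|z₀| + 1) * M := by
              apply mul_le_mul hx' hE' (abs_nonneg _) (by positivity)
      rw [norm_mul, norm_mul, Real.norm_eq_abs, Real.norm_eq_abs, Real.norm_eq_abs,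
        Real.abs_exp]
      apply mul_le_mul (mul_le_mul hE' hh' (abs_nonneg _) hM0) hexp (Real.exp_nonneg _)
        (by positivity))
    intervalIntegrable_const
    (Filter.Eventually.of_forall fun t _ x _ => by
      have h1 : HasDerivAt (fun x : ℝ => x * E t) (E t) x := hasDerivAt_mul_const (E t)
      have h2 := (h1.exp).const_mul (h t)
      exact h2.congr_deriv (by ring))
  exact main.2

/-- Context: `a < b`, `E` continuous on `[a,b]`,
`g z = log( (1/(b-a)) * ∫_a^b exp(z * E t) dt )`.
Statement: `g` is twice differentiable on `ℝ` and
`g''(z) = [ (∫ exp(zE)) (∫ E² exp(zE)) − (∫ E exp(zE))² ] / (∫ exp(zE))²`. -/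
theorem stmt_1 (a b : ℝ) (hab : a < b) (E : ℝ → ℝ)
    (hE : ContinuousOn E (Set.Icc a b))
    (g : ℝ → ℝ)
    (hg : ∀ z : ℝ, g z = Real.log ((1 / (b - a)) * ∫ t in a..b, Real.exp (z * E t))) :
    Differentiable ℝ g ∧ Differentiable ℝ (deriv g) ∧
      ∀ z : ℝ, deriv (deriv g) z =
        ((∫ t in a..b, Real.exp (z * E t)) * (∫ t in a..b, (E t) ^ 2 * Real.exp (z * E t))
            - (∫ t in a..b, E t * Real.exp (z * E t)) ^ 2)
          / (∫ t in a..b, Real.exp (z * E t)) ^ 2 := by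
  set F : ℝ → ℝ := fun z => ∫ t in a..b, Real.exp (z * E t) with hF
  set F1 : ℝ → ℝ := fun z => ∫ t in a..b, E t * Real.exp (z * E t) with hF1
  set F2 : ℝ → ℝ := fun z => ∫ t in a..b, (E t) ^ 2 * Real.exp (z * E t) with hF2
  have hFd : ∀ z, HasDerivAt F (F1 z) z := by
    intro z
    have := key_deriv a b hab E hE (fun _ => 1) continuousOn_const z
    simpa [hF, hF1] using this
  have hF1d : ∀ z, HasDerivAt F1 (F2 z) z := by
    intro z
    have := key_deriv a b hab E hE E hE z
    simpa [hF1, hF2, pow_two, mul_assoc] using this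
  have hFpos : ∀ z, 0 < F z := by
    intro z
    apply intervalIntegral.intervalIntegral_pos_of_pos_on
    · exact (Real.continuous_exp.comp_continuousOn
        (continuousOn_const.mul hE)).intervalIntegrable_of_Icc hab.le
    · intro x _; exact Real.exp_pos _
    · exact hab
  have hgeq : g = fun z => Real.log (1 / (b - a)) + Real.log (F z) := by
    funext z
    rw [hg z, Real.log_mul (one_div_ne_zero (by linarith : b - a ≠ 0)) (ne_of_gt (hFpos z))]
  have hgd : ∀ z, HasDerivAt g (F1 z / F z) z := by
    intro z
    rw [hgeq]
    exact ((hFd z).log (ne_of_gt (hFpos z))).const_add _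
  have hderiv : deriv g = fun z => F1 z / F z := funext fun z => (hgd z).deriv
  have hg2d : ∀ z, HasDerivAt (fun z => F1 z / F z)
      ((F2 z * F z - F1 z * F1 z) / F z ^ 2) z :=
    fun z => (hF1d z).div (hFd z) (ne_of_gt (hFpos z))
  refine ⟨fun z => (hgd z).differentiableAt, ?_, ?_⟩
  · rw [hderiv]; exact fun z => (hg2d z).differentiableAt
  · intro z
    rw [hderiv, (hg2d z).deriv]
    have : F2 z * F z - F1 z * F1 z = F z * F2 z - F1 z ^ 2 := by ring
    rw [this]
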